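/- For every graph G of order n with minimum degree δ(G) > 1, G has a total dominating set of size at most n·(1 + ln δ(G))/δ(G). -/

import Mathlib

open Finset

noncomputable def Hsum (a : ℝ) (r : ℕ) : ℝ := ∑ k ∈ Finset.range r, min 1 (a / (k + 1))

lemma Hsum_step (a : ℝ) (r c : ℕ) (hc1 : 1 ≤ c) (hcr : c ≤ r)
    (hkey : (r : ℝ) ≤ (c : ℝ) * a) : Hsum a (r - c) + 1 ≤ Hsum a r := by
  have hr0 : 0 < r := lt_of_lt_of_le hc1 hcr
  have hrR : (0:ℝ) < r := by exact_mod_cast hr0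
  have hcR : (1:ℝ) ≤ (c:ℝ) := by exact_mod_cast hc1
  have ha : 0 < a := by nlinarith
  have hrc : r = (r - c) + c := by omega
  have hsplit : Hsum a r = Hsum a (r - c)
      + ∑ k ∈ Finset.range c, min 1 (a / ((((r - c) + k : ℕ) : ℝ) + 1)) := by
    rw [Hsum, Hsum]
    conv_lhs => rw [hrc]
    rw [Finset.sum_range_add]
  rw [hsplit]
  have hbound : ∀ k ∈ Finset.range c,
      min 1 (a / r) ≤ min 1 (a / ((((r - c) + k : ℕ) : ℝ) + 1)) := by
    intro k hk
    rw [Finset.mem_range] at hk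
    apply min_le_min le_rfl
    apply div_le_div_of_nonneg_left ha.le (by positivity)
    have h : (r - c) + k + 1 ≤ r := by omega
    exact_mod_cast h
  have h2 : (c : ℝ) * min 1 (a / r)
      ≤ ∑ k ∈ Finset.range c, min 1 (a / ((((r - c) + k : ℕ) : ℝ) + 1)) := by
    calc (c : ℝ) * min 1 (a / r) = ∑ _k ∈ Finset.range c, min 1 (a / r) := by
          rw [Finset.sum_const, Finset.card_range, nsmul_eq_mul]
      _ ≤ _ := Finset.sum_le_sum hbound
  have h3 : (1:ℝ) ≤ (c : ℝ) * min 1 (a / r) := by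
    rcases min_cases (1:ℝ) (a / r) with ⟨h, _⟩ | ⟨h, _⟩
    · rw [h]; simp; exact_mod_cast hc1
    · rw [h]
      rw [mul_div_assoc'] at *
      rw [le_div_iff₀ hrR]
      linarith
  linarith

lemma log_gap (N : ℕ) (hN : 1 ≤ N) : (1:ℝ)/(N+1) ≤ Real.log (N+1) - Real.log N := by
  have h0 : (0:ℝ) < N := by exact_mod_cast hN
  have h1 : (0:ℝ) < (N:ℝ)/(N+1) := by positivity
  have h := Real.log_le_sub_one_of_pos h1
  rw [Real.log_div (ne_of_gt h0) (by positivity)] at h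
  have h2 : (N:ℝ)/(N+1) - 1 = -(1/(N+1)) := by field_simp; ring
  linarith

lemma tail_sum (m : ℕ) : ∀ n, m + 1 ≤ n →
    ∑ k ∈ Finset.Ico m n, (1:ℝ)/(k+1) ≤ 1/(m+1) + Real.log n - Real.log (m+1) := by
  intro n hn
  induction n, hn using Nat.le_induction with
  | base =>
      rw [Nat.Ico_succ_singleton]
      push_cast
      simp
  | succ n hn ih =>
      rw [Finset.sum_Ico_succ_top (by omega)]
      have h2 := log_gap n (by omega)
      push_cast
      push_cast at ih h2
      linarith

lemma Hsum_le (n d : ℕ) (hd : 2 ≤ d) (hn : d + 1 ≤ n) :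
    Hsum ((n:ℝ)/d) n ≤ ((n:ℝ)/d) * (1 + Real.log d) := by
  have hd0 : (0:ℝ) < d := by positivity
  have hn0 : (0:ℝ) < n := by
    have : 0 < n := by omega
    exact_mod_cast this
  set a : ℝ := (n:ℝ)/d with ha
  have ha0 : 0 < a := by positivity
  set m := ⌊a⌋₊ with hm
  have hma : (m:ℝ) ≤ a := Nat.floor_le ha0.le
  have ham : a < m + 1 := Nat.lt_floor_add_one a
  have hmn : m + 1 ≤ n := by
    have hd2 : (2:ℝ) ≤ d := by exact_mod_cast hd
    have h1 : a ≤ (n:ℝ)/2 := by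
      apply div_le_div_of_nonneg_left hn0.le (by norm_num) hd2
    have h2 : (n:ℝ)/2 < n := by linarith
    have : (m:ℝ) < n := lt_of_le_of_lt hma (lt_of_le_of_lt h1 h2)
    have : m < n := by exact_mod_cast this
    omega
  have hsplit : Hsum a n = (∑ k ∈ Finset.range m, min 1 (a/(k+1)))
      + ∑ k ∈ Finset.Ico m n, min 1 (a/(k+1)) := by
    rw [Hsum, Finset.range_eq_Ico, ← Finset.sum_Ico_consecutive _ (Nat.zero_le m) (by omega),
      ← Finset.range_eq_Ico]
  have hfirst : (∑ k ∈ Finset.range m, min 1 (a/(k+1))) ≤ (m:ℝ) := by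
    calc (∑ k ∈ Finset.range m, min 1 (a/(k+1))) ≤ ∑ _k ∈ Finset.range m, (1:ℝ) :=
          Finset.sum_le_sum fun k _ => min_le_left _ _
      _ = m := by simp
  have hsecond : (∑ k ∈ Finset.Ico m n, min 1 (a/(k+1)))
      = a * ∑ k ∈ Finset.Ico m n, (1:ℝ)/(k+1) := by
    rw [Finset.mul_sum]
    apply Finset.sum_congr rfl
    intro k hk
    rw [Finset.mem_Ico] at hk
    have hk1 : (m:ℝ) + 1 ≤ (k:ℝ) + 1 := by
      have : m ≤ k := hk.1
      have : (m:ℝ) ≤ k := by exact_mod_cast this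
      linarith
    rw [min_eq_right]
    · rw [mul_one_div]
    · rw [div_le_one (by positivity)]
      linarith
  have htail := tail_sum m n hmn
  have hlog : Real.log a - Real.log (m+1) ≤ a/(m+1) - 1 := by
    have h1 : (0:ℝ) < a/(m+1) := by positivity
    have h := Real.log_le_sub_one_of_pos h1
    rwa [Real.log_div (ne_of_gt ha0) (by positivity)] at h
  have hlogd : Real.log d = Real.log n - Real.log a := by
    rw [ha, Real.log_div (ne_of_gt hn0) (ne_of_gt hd0)]
    ring
  have hm1 : (0:ℝ) < (m:ℝ) + 1 := by positivity
  rw [hsplit, hlogd]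
  have key : (m:ℝ) + a * (1/(m+1) + Real.log n - Real.log (m+1))
      ≤ a * (1 + (Real.log n - Real.log a)) := by
    have h1 : 0 ≤ a - m := by linarith
    have h2 : a - m - 1 ≤ 0 := by linarith
    have h3 : a * (Real.log a - Real.log (m+1)) ≤ a * (a/(m+1) - 1) :=
      mul_le_mul_of_nonneg_left hlog ha0.le
    have h4 : a * (a/(m+1) - 1) * (m+1) = a*a - a*(m+1) := by field_simp
    have h5 : a * (1/(m+1)) * (m+1) = a := by field_simp
    nlinarith [mul_nonneg h1 (neg_nonneg.mpr h2), mul_pos ha0 hm1]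
  calc (∑ k ∈ Finset.range m, min 1 (a/(k+1))) + ∑ k ∈ Finset.Ico m n, min 1 (a/(k+1))
      ≤ (m:ℝ) + a * ∑ k ∈ Finset.Ico m n, (1:ℝ)/(k+1) := by rw [hsecond]; linarith
    _ ≤ (m:ℝ) + a * (1/(m+1) + Real.log n - Real.log (m+1)) := by
        have := mul_le_mul_of_nonneg_left htail ha0.le
        linarith
    _ ≤ _ := key

lemma greedy_lemma {V : Type*} [Fintype V] [Nonempty V] (G : SimpleGraph V)
    [DecidableRel G.Adj] (hδ : 0 < G.minDegree) :
    ∀ (r : ℕ) (U : Finset V), U.card = r →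
      ∃ S : Finset V, (∀ v ∈ U, ∃ u ∈ S, G.Adj v u) ∧
        (S.card : ℝ) ≤ Hsum ((Fintype.card V : ℝ) / (G.minDegree : ℝ)) r := by
  classical
  intro r
  induction r using Nat.strong_induction_on with
  | _ r ih =>
    intro U hU
    rcases Nat.eq_zero_or_pos r with h0 | hr
    · subst h0
      refine ⟨∅, ?_, by simp [Hsum]⟩
      intro v hv
      rw [Finset.card_eq_zero.mp hU] at hv
      exact absurd hv (Finset.notMem_empty v)
    · -- double counting
      have key : ∑ u : V, (U ∩ G.neighborFinset u).card = ∑ v ∈ U, G.degree v := by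
        have h1 : ∀ u : V, (U ∩ G.neighborFinset u).card
            = ∑ v ∈ U, if G.Adj u v then 1 else 0 := by
          intro u
          have he : U ∩ G.neighborFinset u = U.filter (fun v => G.Adj u v) := by
            ext v
            simp [SimpleGraph.mem_neighborFinset]
          rw [he, ← Finset.sum_filter, Finset.sum_const, smul_eq_mul, mul_one]
        have h2 : ∀ v : V, (∑ u : V, if G.Adj u v then 1 else 0) = G.degree v := by
          intro v
          have he : Finset.univ.filter (fun u => G.Adj u v) = G.neighborFinset v := by
            ext u
            simp [SimpleGraph.mem_neighborFinset, G.adj_comm]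
          rw [← Finset.sum_filter, Finset.sum_const, smul_eq_mul, mul_one, he,
            SimpleGraph.degree]
        simp only [h1]
        rw [Finset.sum_comm]
        exact Finset.sum_congr rfl fun v _ => h2 v
      have hdeg : G.minDegree * r ≤ ∑ u : V, (U ∩ G.neighborFinset u).card := by
        rw [key]
        calc G.minDegree * r = ∑ _v ∈ U, G.minDegree := by
              rw [Finset.sum_const, hU, smul_eq_mul, mul_comm]
          _ ≤ _ := Finset.sum_le_sum fun v _ => G.minDegree_le_degree v
      have hex : ∃ u : V, G.minDegree * r ≤ Fintype.card V * (U ∩ G.neighborFinset u).card := by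
        by_contra hcon
        push_neg at hcon
        have hlt : ∑ u : V, Fintype.card V * (U ∩ G.neighborFinset u).card
            < ∑ _u : V, G.minDegree * r :=
          Finset.sum_lt_sum_of_nonempty Finset.univ_nonempty fun u _ => hcon u
        rw [← Finset.mul_sum, Finset.sum_const, Finset.card_univ, smul_eq_mul] at hlt
        have := Nat.mul_le_mul_left (Fintype.card V) hdeg
        omega
      obtain ⟨u, hu⟩ := hex
      set c := (U ∩ G.neighborFinset u).card with hc
      have hc1 : 1 ≤ c := by
        rcases Nat.eq_zero_or_pos c with h | h
        · rw [h, mul_zero] at hu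
          have : 0 < G.minDegree * r := Nat.mul_pos hδ hr
          omega
        · exact h
      have hcr : c ≤ r := by rw [← hU]; exact (Finset.card_le_card (Finset.inter_subset_left))
      have hU' : (U \ G.neighborFinset u).card = r - c := by
        have := Finset.card_inter_add_card_sdiff U (G.neighborFinset u)
        omega
      obtain ⟨S', hcov', hcard'⟩ := ih (r - c) (by omega) (U \ G.neighborFinset u) hU'
      refine ⟨insert u S', ?_, ?_⟩
      · intro v hv
        by_cases hadj : G.Adj u v
        · exact ⟨u, Finset.mem_insert_self u S', hadj.symm⟩
        · have : v ∈ U \ G.neighborFinset u := by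
            rw [Finset.mem_sdiff]
            exact ⟨hv, by simpa [SimpleGraph.mem_neighborFinset] using hadj⟩
          obtain ⟨w, hw, hadj'⟩ := hcov' v this
          exact ⟨w, Finset.mem_insert_of_mem hw, hadj'⟩
      · have hstep : Hsum ((Fintype.card V : ℝ) / (G.minDegree : ℝ)) (r - c) + 1
            ≤ Hsum ((Fintype.card V : ℝ) / (G.minDegree : ℝ)) r := by
          apply Hsum_step _ r c hc1 hcr
          have hδR : (0:ℝ) < (G.minDegree : ℝ) := by exact_mod_cast hδ
          rw [mul_div_assoc', le_div_iff₀ hδR]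
          have : G.minDegree * r ≤ c * Fintype.card V := by
            rw [mul_comm c _]; exact hu
          calc (r:ℝ) * G.minDegree = ((G.minDegree * r : ℕ) : ℝ) := by push_cast; ring
            _ ≤ ((c * Fintype.card V : ℕ) : ℝ) := by exact_mod_cast this
            _ = (c:ℝ) * Fintype.card V := by push_cast; ring
        calc ((insert u S').card : ℝ) ≤ (S'.card : ℝ) + 1 := by
              exact_mod_cast Finset.card_insert_le u S'
          _ ≤ _ := by linarith

theorem total_domination_min_degree {V : Type*} [Fintype V] (G : SimpleGraph V)
    [DecidableRel G.Adj] (hδ : 1 < G.minDegree) :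
    ∃ S : Finset V, (∀ v : V, ∃ u ∈ S, G.Adj v u) ∧
      (S.card : ℝ) ≤ (Fintype.card V : ℝ) * ((1 + Real.log (G.minDegree)) / (G.minDegree : ℝ)) := by
  cases isEmpty_or_nonempty V with
  | inl h =>
      refine ⟨∅, fun v => (h.false v).elim, ?_⟩
      simp
  | inr h =>
      obtain ⟨S, hS, hcard⟩ := greedy_lemma G (by omega) (Fintype.card V) Finset.univ
        (Finset.card_univ)
      refine ⟨S, fun v => hS v (Finset.mem_univ v), ?_⟩
      have hn : G.minDegree + 1 ≤ Fintype.card V := by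
        obtain ⟨v⟩ := h
        have h1 := G.minDegree_le_degree v
        have h2 := G.degree_lt_card_verts v
        omega
      calc (S.card : ℝ) ≤ Hsum ((Fintype.card V : ℝ) / (G.minDegree : ℝ)) (Fintype.card V) :=
            hcard
        _ ≤ ((Fintype.card V : ℝ) / (G.minDegree : ℝ)) * (1 + Real.log G.minDegree) :=
            Hsum_le _ _ hδ hn
        _ = (Fintype.card V : ℝ) * ((1 + Real.log (G.minDegree)) / (G.minDegree : ℝ)) := by
            ring
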